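/- arXiv:1605.09465 — 7 statements merged into one kernel-verified Lean document; each statement's English description precedes it below -/
import Mathlib

section
/- Let V be a finite set and let G = (V,E) be a connected simple undirected graph with Laplacian matrix L (L_{ii} = deg(i), L_{ij} = -1 if {i,j} ∈ E, and L_{ij} = 0 otherwise). For a nonempty subset S ⊆ V, let L_ff(S) denote the principal submatrix of L obtained by deleting the rows and columns indexed by S; for connected G and nonempty S, L_ff(S) is positive definite, hence invertible. Then the noise-robustness metric R(S) = trace(L_ff(S)^{-1}) is monotone nonincreasing and supermodular on nonempty subsets of V: for all nonempty S ⊆ T ⊆ V and all v ∈ V \ T, R(S) - R(S ∪ {v}) ≥ R(T) - R(T ∪ {v}), and R(S) ≥ R(T). -/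
open Matrix

/-- The grounded Laplacian `L_ff(S)`: the principal submatrix of the Laplacian of `G`
obtained by deleting the rows and columns indexed by `S`. -/
noncomputable def Lff {V : Type*} [Fintype V] [DecidableEq V]
    (G : SimpleGraph V) [DecidableRel G.Adj] (S : Finset V) :
    Matrix {i : V // i ∉ S} {i : V // i ∉ S} ℝ :=
  (G.lapMatrix ℝ).submatrix (Subtype.val) (Subtype.val)

/-- The noise-robustness metric `R(S) = trace(L_ff(S)⁻¹)`. -/
noncomputable def noiseMetric {V : Type*} [Fintype V] [DecidableEq V]
    (G : SimpleGraph V) [DecidableRel G.Adj] (S : Finset V) : ℝ :=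
  Matrix.trace ((Lff G S)⁻¹)

namespace NoiseAux

/-! ### Entrywise matrix inequalities -/

section Entrywise

variable {W : Type*} [Fintype W]

lemma mul_entry_nonneg {B B' : Matrix W W ℝ}
    (hB : ∀ i j, 0 ≤ B i j) (hB' : ∀ i j, 0 ≤ B' i j) :
    ∀ i j, 0 ≤ (B * B') i j := by
  intro i j
  rw [Matrix.mul_apply]
  exact Finset.sum_nonneg fun l _ => mul_nonneg (hB i l) (hB' l j)

lemma pow_entry_nonneg {B : Matrix W W ℝ} [DecidableEq W]
    (hB : ∀ i j, 0 ≤ B i j) : ∀ (k : ℕ) i j, 0 ≤ (B ^ k) i j := by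
  intro k
  induction k with
  | zero => intro i j; simp [Matrix.one_apply]; split <;> norm_num
  | succ k ih => rw [pow_succ]; exact mul_entry_nonneg ih hB

lemma pow_entry_mono {B A : Matrix W W ℝ} [DecidableEq W]
    (hB : ∀ i j, 0 ≤ B i j) (hBA : ∀ i j, B i j ≤ A i j) :
    ∀ (k : ℕ) i j, (B ^ k) i j ≤ (A ^ k) i j := by
  intro k
  induction k with
  | zero => simp
  | succ k ih =>
    intro i j
    rw [pow_succ, pow_succ, Matrix.mul_apply, Matrix.mul_apply]
    refine Finset.sum_le_sum fun l _ => ?_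
    exact mul_le_mul (ih i l) (hBA l j) (hB l j)
      (le_trans (pow_entry_nonneg hB k i l) (ih i l))

lemma pow_super {A A' B B' : Matrix W W ℝ} [DecidableEq W]
    (hB' : ∀ i j, 0 ≤ B' i j)
    (hB'B : ∀ i j, B' i j ≤ B i j)
    (hB'A' : ∀ i j, B' i j ≤ A' i j)
    (hBA : ∀ i j, B i j ≤ A i j)
    (hdiff : ∀ i j, B i j - B' i j ≤ A i j - A' i j) :
    ∀ (k : ℕ) i j, (B ^ k) i j - (B' ^ k) i j ≤ (A ^ k) i j - (A' ^ k) i j := by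
  have hB : ∀ i j, 0 ≤ B i j := fun i j => le_trans (hB' i j) (hB'B i j)
  have hA' : ∀ i j, 0 ≤ A' i j := fun i j => le_trans (hB' i j) (hB'A' i j)
  intro k
  induction k with
  | zero => simp
  | succ k ih =>
    intro i j
    rw [pow_succ, pow_succ, pow_succ, pow_succ,
      Matrix.mul_apply, Matrix.mul_apply, Matrix.mul_apply, Matrix.mul_apply,
      ← Finset.sum_sub_distrib, ← Finset.sum_sub_distrib]
    refine Finset.sum_le_sum fun l _ => ?_
    have h1 : ((B ^ k) i l - (B' ^ k) i l) * B l j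
        ≤ ((A ^ k) i l - (A' ^ k) i l) * A l j := by
      refine mul_le_mul (ih i l) (hBA l j) (hB l j) ?_
      linarith [ih i l, pow_entry_mono hB' hB'B k i l]
    have h2 : (B' ^ k) i l * (B l j - B' l j)
        ≤ (A' ^ k) i l * (A l j - A' l j) := by
      refine mul_le_mul (pow_entry_mono hB' hB'A' k i l) (hdiff l j)
        (by linarith [hB'B l j]) (pow_entry_nonneg hA' k i l)
    calc (B ^ k) i l * B l j - (B' ^ k) i l * B' l j
        = ((B ^ k) i l - (B' ^ k) i l) * B l j + (B' ^ k) i l * (B l j - B' l j) := by ring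
      _ ≤ ((A ^ k) i l - (A' ^ k) i l) * A l j + (A' ^ k) i l * (A l j - A' l j) :=
          add_le_add h1 h2
      _ = (A ^ k) i l * A l j - (A' ^ k) i l * A' l j := by ring

end Entrywise

/-! ### Spectral computations -/

section Spectral

variable {W : Type*} [Fintype W] [DecidableEq W]

lemma trace_conj {U : Matrix W W ℝ} (hU : U ∈ Matrix.unitaryGroup W ℝ)
    (M : Matrix W W ℝ) : (U * M * star U).trace = M.trace := by
  rw [Matrix.trace_mul_cycle, Matrix.mem_unitaryGroup_iff'.mp hU, Matrix.one_mul]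

lemma conj_pow {U : Matrix W W ℝ} (hU : U ∈ Matrix.unitaryGroup W ℝ)
    (M : Matrix W W ℝ) (k : ℕ) :
    (U * M * star U) ^ k = U * M ^ k * star U := by
  induction k with
  | zero => simp [Matrix.mem_unitaryGroup_iff.mp hU]
  | succ k ih =>
    rw [pow_succ, ih, pow_succ]
    have h' : star U * U = 1 := Matrix.mem_unitaryGroup_iff'.mp hU
    calc U * M ^ k * star U * (U * M * star U)
        = U * M ^ k * (star U * U) * M * star U := by
          simp only [Matrix.mul_assoc]
      _ = U * (M ^ k * M) * star U := by rw [h']; simp only [Matrix.mul_one, Matrix.mul_assoc]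

lemma spectral_stuff {L' : Matrix W W ℝ} (hL : L'.PosDef) (c : ℝ) :
    (∀ k : ℕ, ((1 - c • L') ^ k).trace = ∑ i, (1 - c * hL.1.eigenvalues i) ^ k)
    ∧ (L'⁻¹).trace = ∑ i, (hL.1.eigenvalues i)⁻¹ := by
  classical
  set U : Matrix W W ℝ := (hL.1.eigenvectorUnitary : Matrix W W ℝ) with hUdef
  have hU : U ∈ Matrix.unitaryGroup W ℝ := hL.1.eigenvectorUnitary.2
  set lam : W → ℝ := hL.1.eigenvalues with hlam
  have hspec : L' = U * Matrix.diagonal lam * star U := by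
    have h := hL.1.spectral_theorem
    rwa [RCLike.ofReal_real_eq_id, Function.id_comp] at h
  have hone : 1 - c • L' = U * Matrix.diagonal (fun i => 1 - c * lam i) * star U := by
    have hd : Matrix.diagonal (fun i => 1 - c * lam i)
        = 1 - c • Matrix.diagonal lam := by
      rw [← Matrix.diagonal_one, ← Matrix.diagonal_smul, ← Matrix.diagonal_sub]
      congr 1
    rw [hd, Matrix.mul_sub, Matrix.sub_mul]
    rw [Matrix.mul_one, Matrix.mem_unitaryGroup_iff.mp hU]
    rw [Matrix.mul_smul, Matrix.smul_mul, ← hspec]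
  constructor
  · intro k
    rw [hone, conj_pow hU, trace_conj hU, Matrix.diagonal_pow, Matrix.trace_diagonal]
    simp [Pi.pow_apply]
  · have hlam0 : ∀ i, lam i ≠ 0 := fun i => (hL.eigenvalues_pos i).ne'
    have hinv : L' * (U * Matrix.diagonal (fun i => (lam i)⁻¹) * star U) = 1 := by
      rw [hspec]
      calc U * Matrix.diagonal lam * star U * (U * Matrix.diagonal (fun i => (lam i)⁻¹) * star U)
          = U * Matrix.diagonal lam * (star U * U) * Matrix.diagonal (fun i => (lam i)⁻¹)
            * star U := by
            simp only [Matrix.mul_assoc]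
        _ = U * (Matrix.diagonal lam * Matrix.diagonal (fun i => (lam i)⁻¹)) * star U := by
            rw [Matrix.mem_unitaryGroup_iff'.mp hU]
            simp only [Matrix.mul_one, Matrix.mul_assoc]
        _ = 1 := by
            rw [Matrix.diagonal_mul_diagonal]
            have : (fun i => lam i * (lam i)⁻¹) = fun _ => (1 : ℝ) := by
              funext i; exact mul_inv_cancel₀ (hlam0 i)
            rw [this, Matrix.diagonal_one, Matrix.mul_one,
              Matrix.mem_unitaryGroup_iff.mp hU]
    rw [Matrix.inv_eq_right_inv hinv, trace_conj hU, Matrix.trace_diagonal]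

end Spectral

/-! ### Graph-specific results -/

noncomputable def eps (V : Type*) [Fintype V] : ℝ :=
  ((Fintype.card V : ℝ) ^ 2 + 1)⁻¹

lemma eps_pos (V : Type*) [Fintype V] : 0 < eps V := by
  unfold eps
  positivity

variable {V : Type*} [Fintype V] [DecidableEq V]

omit [DecidableEq V] in
lemma eps_mul_lt_one {x : ℝ} (hx : 0 ≤ x) (hle : x ≤ (Fintype.card V : ℝ) ^ 2) :
    eps V * x < 1 := by
  unfold eps
  rw [inv_mul_lt_iff₀ (by positivity), mul_one]
  nlinarith

omit [DecidableEq V] in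
lemma eps_mul_le_one {x : ℝ} (hx : 0 ≤ x) (hle : x ≤ (Fintype.card V : ℝ) + 1) :
    eps V * x ≤ 1 := by
  unfold eps
  rw [inv_mul_le_iff₀ (by positivity), mul_one]
  rcases Nat.eq_zero_or_pos (Fintype.card V) with h | h
  · rw [h]; norm_num; rw [h] at hle; norm_num at hle; linarith
  · have h1 : (1 : ℝ) ≤ (Fintype.card V : ℝ) := by exact_mod_cast h
    nlinarith

lemma sum_subtype_compl (S : Finset V) (g : V → ℝ) (hg : ∀ i ∈ S, g i = 0) :
    ∑ i : {i : V // i ∉ S}, g i.val = ∑ i, g i := by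
  rw [← Finset.sum_subtype (Sᶜ) (fun x => Finset.mem_compl) g]
  exact Finset.sum_subset (Finset.subset_univ _) fun x _ hx => by
    have : x ∈ S := by simpa [Finset.mem_compl] using hx
    exact hg x this

lemma card_compl_real (X : Finset V) :
    (Fintype.card {i : V // i ∉ X} : ℝ) = (Fintype.card V : ℝ) - X.card := by
  have h1 : Fintype.card {i : V // i ∉ X} = Fintype.card V - X.card := by
    simpa [Fintype.card_coe] using Fintype.card_subtype_compl (fun i : V => i ∈ X)
  rw [h1, Nat.cast_sub (Finset.card_le_univ X)]

variable (G : SimpleGraph V) [DecidableRel G.Adj]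

lemma posDef_Lff (hG : G.Connected) {S : Finset V} (hS : S.Nonempty) :
    (Lff G S).PosDef := by
  rw [posDef_iff_dotProduct_mulVec]
  constructor
  · ext i j
    simp only [Lff, conjTranspose_apply, submatrix_apply, star_trivial]
    exact congrFun (congrFun (G.isSymm_lapMatrix (R := ℝ)) _) _
  · intro x hx
    set y : V → ℝ := fun i => if h : i ∈ S then 0 else x ⟨i, h⟩ with hy
    have hyS : ∀ i ∈ S, y i = 0 := fun i hi => by simp [hy, hi]
    have hyv : ∀ i : {i : V // i ∉ S}, y i.val = x i := fun i => by
      simp [hy, i.2]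
    have hxy : star x ⬝ᵥ (Lff G S *ᵥ x) = y ⬝ᵥ (G.lapMatrix ℝ *ᵥ y) := by
      rw [star_trivial]
      have hrow : ∀ i : {i : V // i ∉ S},
          (Lff G S *ᵥ x) i = (G.lapMatrix ℝ *ᵥ y) i.val := by
        intro i
        simp only [Matrix.mulVec, dotProduct, Lff, submatrix_apply]
        rw [← sum_subtype_compl S (fun j => G.lapMatrix ℝ i.val j * y j)
          (fun j hj => by simp only [hyS j hj, mul_zero])]
        exact Finset.sum_congr rfl fun j _ => by rw [hyv]
      have := sum_subtype_compl S (fun i => y i * (G.lapMatrix ℝ *ᵥ y) i)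
        (fun i hi => by simp only [hyS i hi, zero_mul])
      rw [dotProduct, dotProduct, ← this]
      exact Finset.sum_congr rfl fun i _ => by rw [hyv, hrow]
    rw [hxy]
    have h0 : 0 ≤ y ⬝ᵥ (G.lapMatrix ℝ *ᵥ y) := by
      simpa [star_trivial] using (SimpleGraph.posSemidef_lapMatrix ℝ G).dotProduct_mulVec_nonneg y
    rcases h0.lt_or_eq with h | h
    · exact h
    · exfalso
      have hz : ∀ i j : V, y i = y j := by
        have h' : Matrix.toLinearMap₂' ℝ (G.lapMatrix ℝ) y y = 0 := by
          rw [Matrix.toLinearMap₂'_apply']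
          exact h.symm
        have := (G.lapMatrix_toLinearMap₂'_apply'_eq_zero_iff_forall_reachable y).mp h'
        intro i j
        exact this i j (hG.preconnected i j)
      obtain ⟨s0, hs0⟩ := hS
      apply hx
      funext i
      have h2 : y i.val = y s0 := hz i.val s0
      rw [hyS s0 hs0] at h2
      simp only [Pi.zero_apply]
      rw [← hyv i, h2]

lemma trace_Lff_le (S : Finset V) :
    (Lff G S).trace ≤ (Fintype.card V : ℝ) ^ 2 := by
  have h1 : (Lff G S).trace = ∑ i : {i : V // i ∉ S}, (G.degree i.val : ℝ) := by
    unfold Matrix.trace Lff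
    refine Finset.sum_congr rfl fun i _ => ?_
    simp [Matrix.diag, SimpleGraph.lapMatrix, SimpleGraph.degMatrix]
  rw [h1]
  calc ∑ i : {i : V // i ∉ S}, (G.degree i.val : ℝ)
      ≤ ∑ _i : {i : V // i ∉ S}, (Fintype.card V : ℝ) := by
        refine Finset.sum_le_sum fun i _ => ?_
        exact_mod_cast (G.degree_lt_card_verts i.val).le
    _ = (Fintype.card {i : V // i ∉ S} : ℝ) * Fintype.card V := by
        rw [Finset.sum_const, nsmul_eq_mul]; norm_num
    _ ≤ (Fintype.card V : ℝ) * Fintype.card V := by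
        have := Fintype.card_subtype_le (fun i : V => i ∉ S)
        have h2 : (Fintype.card {i : V // i ∉ S} : ℝ) ≤ Fintype.card V := by
          exact_mod_cast this
        nlinarith [Nat.cast_nonneg (α := ℝ) (Fintype.card V)]
    _ = (Fintype.card V : ℝ) ^ 2 := by ring

lemma base_nonneg : ∀ i j, 0 ≤ (1 - eps V • G.lapMatrix ℝ) i j := by
  intro i j
  simp only [Matrix.sub_apply, Matrix.smul_apply, Matrix.one_apply, smul_eq_mul,
    SimpleGraph.lapMatrix, SimpleGraph.degMatrix, Matrix.sub_apply,
    Matrix.diagonal_apply, SimpleGraph.adjMatrix_apply]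
  by_cases h : i = j
  · subst h
    simp only [if_pos rfl, if_true, G.irrefl, if_false, sub_zero]
    have hd : (G.degree i : ℝ) ≤ (Fintype.card V : ℝ) + 1 := by
      have h' : (G.degree i : ℝ) ≤ (Fintype.card V : ℝ) := by
        exact_mod_cast (G.degree_lt_card_verts i).le
      linarith
    have := eps_mul_le_one (V := V) (Nat.cast_nonneg _) hd
    linarith
  · simp only [if_neg h]
    by_cases ha : G.Adj i j
    · simp only [if_pos ha]
      have := (eps_pos V).le
      linarith
    · simp [ha]

/-- The full-size auxiliary matrix: `1 - eps • L` with rows and columns in `S` zeroed out. -/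
noncomputable def Fm (S : Finset V) : Matrix V V ℝ :=
  Matrix.of fun i j => if i ∈ S ∨ j ∈ S then 0 else (1 - eps V • G.lapMatrix ℝ) i j

lemma Fm_nonneg (S : Finset V) : ∀ i j, 0 ≤ Fm G S i j := by
  intro i j
  simp only [Fm, Matrix.of_apply]
  split
  · exact le_refl 0
  · exact base_nonneg G i j

lemma Fm_mono {S T : Finset V} (h : S ⊆ T) : ∀ i j, Fm G T i j ≤ Fm G S i j := by
  intro i j
  simp only [Fm, Matrix.of_apply]
  by_cases hc : i ∈ T ∨ j ∈ T
  · rw [if_pos hc]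
    split
    · exact le_refl 0
    · exact base_nonneg G i j
  · rw [if_neg hc, if_neg (fun hc' => hc (hc'.imp (@h i) (@h j)))]

lemma Fm_diff {S T : Finset V} (h : S ⊆ T) {v : V} :
    ∀ i j, Fm G T i j - Fm G (insert v T) i j ≤ Fm G S i j - Fm G (insert v S) i j := by
  intro i j
  have hSv : ∀ i j, Fm G (insert v S) i j ≤ Fm G S i j :=
    Fm_mono G (Finset.subset_insert v S)
  by_cases hc : i ∈ T ∨ j ∈ T
  · have h0 : Fm G T i j = 0 := by simp only [Fm, Matrix.of_apply, if_pos hc]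
    have h0' : Fm G (insert v T) i j = 0 := by
      simp only [Fm, Matrix.of_apply]
      rw [if_pos (hc.imp (fun hi => Finset.mem_insert_of_mem hi)
        (fun hj => Finset.mem_insert_of_mem hj))]
    rw [h0, h0', sub_zero]
    linarith [hSv i j]
  · push_neg at hc
    obtain ⟨hiT, hjT⟩ := hc
    have hiS : i ∉ S := fun hh => hiT (h hh)
    have hjS : j ∉ S := fun hh => hjT (h hh)
    by_cases hv : i = v ∨ j = v
    · have hT' : i ∈ insert v T ∨ j ∈ insert v T := by
        rcases hv with h' | h' <;> [left; right] <;> simp [h']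
      have hS' : i ∈ insert v S ∨ j ∈ insert v S := by
        rcases hv with h' | h' <;> [left; right] <;> simp [h']
      have e1 : Fm G (insert v T) i j = 0 := by
        simp only [Fm, Matrix.of_apply]; rw [if_pos hT']
      have e2 : Fm G (insert v S) i j = 0 := by
        simp only [Fm, Matrix.of_apply]; rw [if_pos hS']
      have e3 : Fm G T i j = (1 - eps V • G.lapMatrix ℝ) i j := by
        simp only [Fm, Matrix.of_apply]; rw [if_neg (by tauto)]
      have e4 : Fm G S i j = (1 - eps V • G.lapMatrix ℝ) i j := by
        simp only [Fm, Matrix.of_apply]; rw [if_neg (by tauto)]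
      rw [e1, e2, e3, e4]
    · push_neg at hv
      have e1 : Fm G (insert v T) i j = Fm G T i j := by
        simp only [Fm, Matrix.of_apply]
        rw [if_neg (by simp [Finset.mem_insert]; tauto), if_neg (by tauto)]
      rw [e1, sub_self]
      linarith [hSv i j]

lemma Fm_entry (S : Finset V) (i j : {i : V // i ∉ S}) :
    Fm G S i.val j.val = (1 - eps V • Lff G S) i j := by
  simp only [Fm, Matrix.of_apply, if_neg (by push_neg; exact ⟨i.2, j.2⟩ :
    ¬((i : V) ∈ S ∨ (j : V) ∈ S))]
  simp only [Matrix.sub_apply, Matrix.smul_apply, Matrix.one_apply, Lff,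
    Matrix.submatrix_apply]
  congr 1
  simp [Subtype.ext_iff]

lemma Fm_pow_submatrix (S : Finset V) (k : ℕ) (i j : {i : V // i ∉ S}) :
    ((Fm G S) ^ k) i.val j.val = ((1 - eps V • Lff G S) ^ k) i j := by
  induction k generalizing i j with
  | zero =>
    simp only [pow_zero, Matrix.one_apply, Subtype.ext_iff]
  | succ k ih =>
    rw [pow_succ, pow_succ, Matrix.mul_apply, Matrix.mul_apply]
    rw [← sum_subtype_compl S (fun l => ((Fm G S) ^ k) i.val l * Fm G S l j.val)
      (fun l hl => by
        have : Fm G S l j.val = 0 := by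
          simp only [Fm, Matrix.of_apply, if_pos (Or.inl hl)]
        simp only [this, mul_zero])]
    exact Finset.sum_congr rfl fun l _ => by
      rw [ih, Fm_entry]

lemma Fm_pow_row_zero (S : Finset V) (k : ℕ) {i : V} (hi : i ∈ S) (j : V) :
    ((Fm G S) ^ (k + 1)) i j = 0 := by
  rw [pow_succ', Matrix.mul_apply]
  refine Finset.sum_eq_zero fun l _ => ?_
  have : Fm G S i l = 0 := by simp only [Fm, Matrix.of_apply, if_pos (Or.inl hi)]
  rw [this, zero_mul]

lemma trace_pow_succ (S : Finset V) (k : ℕ) :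
    ((1 - eps V • Lff G S) ^ (k + 1)).trace = ((Fm G S) ^ (k + 1)).trace := by
  unfold Matrix.trace
  rw [← sum_subtype_compl S (fun i => ((Fm G S) ^ (k + 1)).diag i)
    (fun i hi => Fm_pow_row_zero G S k hi i)]
  exact Finset.sum_congr rfl fun i _ => by
    simp only [Matrix.diag]
    rw [Fm_pow_submatrix]

lemma package (hG : G.Connected) {S : Finset V} (hS : S.Nonempty) :
    Summable (fun k : ℕ => ((1 - eps V • Lff G S) ^ k).trace)
    ∧ noiseMetric G S = eps V * ∑' k : ℕ, ((1 - eps V • Lff G S) ^ k).trace := by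
  have hPD := posDef_Lff G hG hS
  set lam := hPD.1.eigenvalues with hlam
  obtain ⟨hpow, hinv⟩ := spectral_stuff hPD (eps V)
  have htr : (Lff G S).trace = ∑ i, lam i := by
    have h1 := (spectral_stuff hPD 1).1 1
    simp only [pow_one, one_mul, one_smul] at h1
    rw [Matrix.trace_sub, Matrix.trace_one] at h1
    rw [Finset.sum_sub_distrib, Finset.sum_const, Finset.card_univ] at h1
    simp only [nsmul_eq_mul, mul_one] at h1
    linarith
  have hlam_pos : ∀ i, 0 < lam i := fun i => hPD.eigenvalues_pos i
  have hlam_le : ∀ i, lam i ≤ (Fintype.card V : ℝ) ^ 2 := by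
    intro i
    calc lam i ≤ ∑ j, lam j :=
          Finset.single_le_sum (fun j _ => (hlam_pos j).le) (Finset.mem_univ i)
      _ = (Lff G S).trace := htr.symm
      _ ≤ (Fintype.card V : ℝ) ^ 2 := trace_Lff_le G S
  set μ : _ → ℝ := fun i => 1 - eps V * lam i with hμ
  have hμ0 : ∀ i, 0 ≤ μ i := fun i => by
    have := eps_mul_lt_one (V := V) (hlam_pos i).le (hlam_le i)
    simp only [hμ]; linarith
  have hμ1 : ∀ i, μ i < 1 := fun i => by
    have := mul_pos (eps_pos V) (hlam_pos i)
    simp only [hμ]; linarith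
  have hfun : (fun k : ℕ => ((1 - eps V • Lff G S) ^ k).trace)
      = fun k => ∑ i, μ i ^ k := funext fun k => by rw [hpow k]
  have hsummable : Summable (fun k : ℕ => ((1 - eps V • Lff G S) ^ k).trace) := by
    rw [hfun]
    exact summable_sum fun i _ => summable_geometric_of_lt_one (hμ0 i) (hμ1 i)
  refine ⟨hsummable, ?_⟩
  have htsum : ∑' k : ℕ, ((1 - eps V • Lff G S) ^ k).trace
      = ∑ i, (eps V * lam i)⁻¹ := by
    rw [hfun, Summable.tsum_finsetSum fun i _ => summable_geometric_of_lt_one (hμ0 i) (hμ1 i)]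
    refine Finset.sum_congr rfl fun i _ => ?_
    rw [tsum_geometric_of_lt_one (hμ0 i) (hμ1 i)]
    congr 1
    simp only [hμ]; ring
  rw [htsum, noiseMetric, hinv, Finset.mul_sum]
  refine Finset.sum_congr rfl fun i _ => ?_
  rw [mul_inv, ← mul_assoc, mul_inv_cancel₀ (eps_pos V).ne', one_mul]

end NoiseAux

open NoiseAux in
/-- For a connected simple undirected graph `G`, the noise-robustness metric
`R(S) = trace(L_ff(S)⁻¹)` is monotone nonincreasing and supermodular on nonempty
subsets of the vertex set. -/
theorem noiseMetric_supermodular {V : Type*} [Fintype V] [DecidableEq V]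
    (G : SimpleGraph V) [DecidableRel G.Adj] (hG : G.Connected) :
    ∀ S T : Finset V, S.Nonempty → S ⊆ T → ∀ v ∉ T,
      (noiseMetric G S - noiseMetric G (insert v S) ≥
        noiseMetric G T - noiseMetric G (insert v T)) ∧
      noiseMetric G S ≥ noiseMetric G T := by
  intro S T hS hST v hvT
  classical
  have hvS : v ∉ S := fun h => hvT (hST h)
  have hTne : T.Nonempty := hS.mono hST
  obtain ⟨sumS, valS⟩ := package G hG hS
  obtain ⟨sumT, valT⟩ := package G hG hTne
  obtain ⟨sumS', valS'⟩ := package G hG (Finset.insert_nonempty v S)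
  obtain ⟨sumT', valT'⟩ := package G hG (Finset.insert_nonempty v T)
  -- pointwise monotonicity
  have hmono : ∀ k : ℕ, ((1 - eps V • Lff G T) ^ k).trace
      ≤ ((1 - eps V • Lff G S) ^ k).trace := by
    intro k
    cases k with
    | zero =>
      rw [pow_zero, pow_zero, Matrix.trace_one, Matrix.trace_one]
      rw [card_compl_real, card_compl_real]
      have : (S.card : ℝ) ≤ T.card := by exact_mod_cast Finset.card_le_card hST
      linarith
    | succ k =>
      rw [trace_pow_succ, trace_pow_succ]
      unfold Matrix.trace
      refine Finset.sum_le_sum fun i _ => ?_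
      exact pow_entry_mono (Fm_nonneg G T) (Fm_mono G hST) (k + 1) i i
  -- pointwise supermodularity
  have hsup : ∀ k : ℕ,
      ((1 - eps V • Lff G T) ^ k).trace + ((1 - eps V • Lff G (insert v S)) ^ k).trace
      ≤ ((1 - eps V • Lff G S) ^ k).trace
        + ((1 - eps V • Lff G (insert v T)) ^ k).trace := by
    intro k
    cases k with
    | zero =>
      simp only [pow_zero, Matrix.trace_one]
      rw [card_compl_real, card_compl_real, card_compl_real, card_compl_real,
        Finset.card_insert_of_notMem hvS, Finset.card_insert_of_notMem hvT]
      push_cast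
      linarith
    | succ k =>
      rw [trace_pow_succ, trace_pow_succ, trace_pow_succ, trace_pow_succ]
      have hps := pow_super
        (A := Fm G S) (A' := Fm G (insert v S)) (B := Fm G T) (B' := Fm G (insert v T))
        (Fm_nonneg G (insert v T))
        (Fm_mono G (Finset.subset_insert v T))
        (Fm_mono G (Finset.insert_subset_insert v hST))
        (Fm_mono G hST)
        (Fm_diff G hST)
        (k + 1)
      have hsum : ∑ i, ((Fm G T ^ (k+1)) i i - (Fm G (insert v T) ^ (k+1)) i i)
          ≤ ∑ i, ((Fm G S ^ (k+1)) i i - (Fm G (insert v S) ^ (k+1)) i i) :=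
        Finset.sum_le_sum fun i _ => hps i i
      rw [Finset.sum_sub_distrib, Finset.sum_sub_distrib] at hsum
      unfold Matrix.trace Matrix.diag
      linarith [hsum]
  -- combine via tsums
  have h1 : ∑' k : ℕ, (((1 - eps V • Lff G T) ^ k).trace
        + ((1 - eps V • Lff G (insert v S)) ^ k).trace)
      ≤ ∑' k : ℕ, (((1 - eps V • Lff G S) ^ k).trace
        + ((1 - eps V • Lff G (insert v T)) ^ k).trace) :=
    Summable.tsum_le_tsum hsup (sumT.add sumS') (sumS.add sumT')
  rw [Summable.tsum_add sumT sumS', Summable.tsum_add sumS sumT'] at h1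
  have h2 : ∑' k : ℕ, ((1 - eps V • Lff G T) ^ k).trace
      ≤ ∑' k : ℕ, ((1 - eps V • Lff G S) ^ k).trace :=
    Summable.tsum_le_tsum hmono sumT sumS
  have heps := (eps_pos V).le
  constructor
  · rw [ge_iff_le, valS, valT, valS', valT']
    have h3 := mul_le_mul_of_nonneg_left h1 heps
    rw [mul_add, mul_add] at h3
    linarith
  · rw [ge_iff_le, valT, valS]
    exact mul_le_mul_of_nonneg_left h2 heps
end

section
/- Let Σ₀ ∈ ℝ^{n×n} be a symmetric positive definite matrix, σ > 0, and c₁, …, c_m ∈ ℝⁿ. For S ⊆ {1,…,m}, define the posterior covariance Σ(S) = (Σ₀^{-1} + σ^{-2} Σ_{i∈S} c_i c_iᵀ)^{-1}, which is positive definite. Then the function h(S) = log det Σ(S) is monotone nonincreasing and supermodular: for all S ⊆ T ⊆ {1,…,m} and v ∉ T, h(S) - h(S ∪ {v}) ≥ h(T) - h(T ∪ {v}), and h(S) ≥ h(T). -/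
open Matrix



lemma vecMulVec_mulVec' {n : ℕ} (u x : Fin n → ℝ) :
    vecMulVec u u *ᵥ x = (u ⬝ᵥ x) • u := by
  funext i
  simp [vecMulVec_apply, mulVec, dotProduct, Finset.mul_sum, mul_assoc, mul_comm, mul_left_comm]

lemma dot_vecMulVec {n : ℕ} (u x : Fin n → ℝ) :
    x ⬝ᵥ vecMulVec u u *ᵥ x = (u ⬝ᵥ x) * (u ⬝ᵥ x) := by
  rw [vecMulVec_mulVec', dotProduct_smul, smul_eq_mul, dotProduct_comm x u]

lemma vecMulVec_herm {n : ℕ} (u : Fin n → ℝ) : (vecMulVec u u).IsHermitian := by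
  ext i j
  simp [vecMulVec_apply, conjTranspose, mul_comm]

lemma sum_mulVec' {n : ℕ} {ι : Type*} [DecidableEq ι] (U : Finset ι) (M : ι → Matrix (Fin n) (Fin n) ℝ)
    (x : Fin n → ℝ) : (∑ i ∈ U, M i) *ᵥ x = ∑ i ∈ U, M i *ᵥ x := by
  induction U using Finset.induction_on with
  | empty => simp [Matrix.zero_mulVec]
  | insert _ _ h ih => rw [Finset.sum_insert h, Finset.sum_insert h, Matrix.add_mulVec, ih]

lemma dot_sum' {n : ℕ} {ι : Type*} [DecidableEq ι] (U : Finset ι) (f : ι → (Fin n → ℝ))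
    (x : Fin n → ℝ) : x ⬝ᵥ ∑ i ∈ U, f i = ∑ i ∈ U, x ⬝ᵥ f i := by
  induction U using Finset.induction_on with
  | empty => simp
  | insert _ _ h ih => rw [Finset.sum_insert h, Finset.sum_insert h, dotProduct_add, ih]

lemma psd_smul_sum {n m : ℕ} (t : ℝ) (ht : 0 ≤ t) (c : Fin m → (Fin n → ℝ))
    (U : Finset (Fin m)) :
    (t • ∑ i ∈ U, vecMulVec (c i) (c i)).PosSemidef := by
  refine Matrix.posSemidef_iff_dotProduct_mulVec.mpr ⟨?_, ?_⟩
  · unfold Matrix.IsHermitian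
    ext i j
    simp only [Matrix.conjTranspose_apply, Matrix.smul_apply, star_trivial]
    congr 1
    simp only [Matrix.sum_apply, vecMulVec_apply]
    exact Finset.sum_congr rfl fun k _ => by ring
  · intro x
    have : star x ⬝ᵥ (t • ∑ i ∈ U, vecMulVec (c i) (c i)) *ᵥ x
        = t * ∑ i ∈ U, (c i ⬝ᵥ x) * (c i ⬝ᵥ x) := by
      rw [show (star x : Fin n → ℝ) = x from rfl]
      rw [smul_mulVec, dotProduct_smul, smul_eq_mul]
      congr 1
      rw [sum_mulVec', dot_sum']
      exact Finset.sum_congr rfl fun i _ => dot_vecMulVec _ _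
    rw [this]
    exact mul_nonneg ht (Finset.sum_nonneg fun i _ => mul_self_nonneg _)

lemma quad_ineq {n : ℕ} {A : Matrix (Fin n) (Fin n) ℝ} (hA : A.PosDef)
    (x y : Fin n → ℝ) :
    2 * (y ⬝ᵥ x) - y ⬝ᵥ A *ᵥ y ≤ x ⬝ᵥ A⁻¹ *ᵥ x := by
  have hAi : A⁻¹.PosDef := hA.inv
  set z := y - A⁻¹ *ᵥ x with hz
  have hzz : 0 ≤ z ⬝ᵥ A *ᵥ z := hA.posSemidef.dotProduct_mulVec_nonneg z
  have hAAi : A *ᵥ (A⁻¹ *ᵥ x) = x := by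
    rw [Matrix.mulVec_mulVec, Matrix.mul_nonsing_inv A (isUnit_iff_ne_zero.mpr hA.det_pos.ne'),
      Matrix.one_mulVec]
  have hsym : ∀ u v : Fin n → ℝ, u ⬝ᵥ A *ᵥ v = (A *ᵥ u) ⬝ᵥ v := by
    intro u v
    have hT : Aᵀ = A := by
      rw [← Matrix.conjTranspose_eq_transpose_of_trivial]
      exact hA.isHermitian.eq
    rw [Matrix.dotProduct_mulVec, ← Matrix.vecMul_transpose, hT]
  have expand : z ⬝ᵥ A *ᵥ z
      = y ⬝ᵥ A *ᵥ y - 2 * (y ⬝ᵥ x) + x ⬝ᵥ A⁻¹ *ᵥ x := by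
    rw [hz, Matrix.mulVec_sub, sub_dotProduct, dotProduct_sub, dotProduct_sub, hAAi]
    have e1 : (A⁻¹ *ᵥ x) ⬝ᵥ A *ᵥ y = y ⬝ᵥ x := by
      rw [hsym, hAAi, dotProduct_comm]
    have e3 : (A⁻¹ *ᵥ x) ⬝ᵥ x = x ⬝ᵥ A⁻¹ *ᵥ x := dotProduct_comm _ _
    rw [e1, e3]
    ring
  linarith [hzz, expand.symm.le, expand.le]

lemma inv_quad_mono {n : ℕ} {A B : Matrix (Fin n) (Fin n) ℝ} (hA : A.PosDef)
    (hB : B.PosDef) (hAB : (B - A).PosSemidef) (x : Fin n → ℝ) :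
    x ⬝ᵥ B⁻¹ *ᵥ x ≤ x ⬝ᵥ A⁻¹ *ᵥ x := by
  set y := B⁻¹ *ᵥ x with hy
  have hBy : B *ᵥ y = x := by
    rw [hy, Matrix.mulVec_mulVec, Matrix.mul_nonsing_inv B
      (isUnit_iff_ne_zero.mpr hB.det_pos.ne'), Matrix.one_mulVec]
  have h1 : y ⬝ᵥ B *ᵥ y = y ⬝ᵥ x := by rw [hBy]
  have h2 : 0 ≤ y ⬝ᵥ (B - A) *ᵥ y := hAB.dotProduct_mulVec_nonneg y
  have h3 : y ⬝ᵥ (B - A) *ᵥ y = y ⬝ᵥ B *ᵥ y - y ⬝ᵥ A *ᵥ y := by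
    rw [Matrix.sub_mulVec, dotProduct_sub]
  have h4 := quad_ineq hA x y
  have h5 : x ⬝ᵥ B⁻¹ *ᵥ x = y ⬝ᵥ x := by rw [← hy, dotProduct_comm]
  linarith

lemma det_rank_one {n : ℕ} {A : Matrix (Fin n) (Fin n) ℝ} (hA : A.PosDef)
    (t : ℝ) (u : Fin n → ℝ) :
    (A + t • vecMulVec u u).det = A.det * (1 + t * (u ⬝ᵥ A⁻¹ *ᵥ u)) := by
  have h1 : t • vecMulVec u u = replicateCol Unit (t • u) * replicateRow Unit u := by
    rw [vecMulVec_eq Unit, Matrix.replicateCol_smul, Matrix.smul_mul]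
  rw [h1, Matrix.det_add_replicateCol_mul_replicateRow (isUnit_iff_ne_zero.mpr hA.det_pos.ne')]
  congr 1
  rw [Matrix.det_unique]
  simp only [Pi.add_apply, Matrix.add_apply, Matrix.one_apply_eq]
  rw [show replicateRow Unit u * A⁻¹ = replicateRow Unit (u ᵥ* A⁻¹) from (Matrix.replicateRow_vecMul _ _).symm,
    Matrix.replicateRow_mul_replicateCol_apply]
  rw [dotProduct_smul, smul_eq_mul, ← Matrix.dotProduct_mulVec]


/-- For a symmetric positive definite prior covariance `Sig0`, noise level `sig > 0`, and
measurement vectors `c₁,…,c_m`, the log-determinant of the posterior covariance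
`Sig(S) = (Sig0⁻¹ + sig⁻² ∑_{i∈S} cᵢcᵢᵀ)⁻¹` is monotone nonincreasing and supermodular in
the selected sensor set `S`. -/
theorem logdet_posterior_supermodular {n m : ℕ}
    (Sig0 : Matrix (Fin n) (Fin n) ℝ) (hSig0 : Sig0.PosDef)
    (sig : ℝ) (hsig : 0 < sig)
    (c : Fin m → (Fin n → ℝ))
    (h : Finset (Fin m) → ℝ)
    (hh : ∀ S : Finset (Fin m), h S =
      Real.log (Matrix.det ((Sig0⁻¹ +
        sig⁻¹ ^ 2 • ∑ i ∈ S, Matrix.vecMulVec (c i) (c i))⁻¹))) :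
    ∀ S T : Finset (Fin m), S ⊆ T → ∀ v ∉ T,
      (h S - h (insert v S) ≥ h T - h (insert v T)) ∧ h S ≥ h T := by
  have ht : (0:ℝ) < sig⁻¹ ^ 2 := by positivity
  set t : ℝ := sig⁻¹ ^ 2 with htdef
  set A : Finset (Fin m) → Matrix (Fin n) (Fin n) ℝ :=
    fun S => Sig0⁻¹ + t • ∑ i ∈ S, vecMulVec (c i) (c i) with hAdef
  have hApos : ∀ S, (A S).PosDef := fun S =>
    (hSig0.inv).add_posSemidef (psd_smul_sum t ht.le c S)
  have hdet : ∀ S, 0 < (A S).det := fun S => (hApos S).det_pos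
  have hlog : ∀ S, h S = - Real.log (A S).det := by
    intro S
    rw [hh S, Matrix.det_nonsing_inv, Ring.inverse_eq_inv', Real.log_inv]
  have hq0 : ∀ S v, 0 ≤ c v ⬝ᵥ (A S)⁻¹ *ᵥ c v := fun S v => by
    simpa using ((hApos S).inv).posSemidef.dotProduct_mulVec_nonneg (c v)
  have hins : ∀ (S : Finset (Fin m)) v, v ∉ S →
      (A (insert v S)).det = (A S).det * (1 + t * (c v ⬝ᵥ (A S)⁻¹ *ᵥ c v)) := by
    intro S v hv
    have hA' : A (insert v S) = A S + t • vecMulVec (c v) (c v) := by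
      rw [hAdef]
      simp only
      rw [Finset.sum_insert hv, smul_add,
        add_comm (t • vecMulVec (c v) (c v)) (t • ∑ i ∈ S, vecMulVec (c i) (c i)),
        ← add_assoc]
    rw [hA', det_rank_one (hApos S) t (c v)]
  have hdetmono : ∀ S U : Finset (Fin m), (A S).det ≤ (A (S ∪ U)).det := by
    intro S U
    induction U using Finset.induction_on with
    | empty => simp
    | @insert a U ha ih =>
      rw [Finset.union_insert]
      by_cases hin : a ∈ S ∪ U
      · rwa [Finset.insert_eq_self.mpr hin]
      · rw [hins (S ∪ U) a hin]
        refine ih.trans (le_mul_of_one_le_right (hdet _).le ?_)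
        nlinarith [hq0 (S ∪ U) a]
  have hmono : ∀ S T : Finset (Fin m), S ⊆ T → (A S).det ≤ (A T).det := by
    intro S T hST
    have := hdetmono S (T \ S)
    rwa [Finset.union_sdiff_of_subset hST] at this
  have hpsd : ∀ S T : Finset (Fin m), S ⊆ T → (A T - A S).PosSemidef := by
    intro S T hST
    have e : A T - A S = t • ∑ i ∈ T \ S, vecMulVec (c i) (c i) := by
      rw [hAdef]
      simp only
      rw [← Finset.sum_sdiff hST, smul_add,
        add_comm (t • ∑ i ∈ T \ S, vecMulVec (c i) (c i))
          (t • ∑ i ∈ S, vecMulVec (c i) (c i)),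
        ← add_assoc, add_sub_cancel_left]
    rw [e]
    exact psd_smul_sum t ht.le c _
  intro S T hST v hvT
  have hvS : v ∉ S := fun hx => hvT (hST hx)
  have hposS : (0:ℝ) < 1 + t * (c v ⬝ᵥ (A S)⁻¹ *ᵥ c v) := by nlinarith [hq0 S v]
  have hposT : (0:ℝ) < 1 + t * (c v ⬝ᵥ (A T)⁻¹ *ᵥ c v) := by nlinarith [hq0 T v]
  constructor
  · have hqq : c v ⬝ᵥ (A T)⁻¹ *ᵥ c v ≤ c v ⬝ᵥ (A S)⁻¹ *ᵥ c v :=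
      inv_quad_mono (hApos S) (hApos T) (hpsd S T hST) (c v)
    have e1 : h S - h (insert v S) = Real.log (1 + t * (c v ⬝ᵥ (A S)⁻¹ *ᵥ c v)) := by
      rw [hlog, hlog, hins S v hvS, Real.log_mul (hdet S).ne' hposS.ne']
      ring
    have e2 : h T - h (insert v T) = Real.log (1 + t * (c v ⬝ᵥ (A T)⁻¹ *ᵥ c v)) := by
      rw [hlog, hlog, hins T v hvT, Real.log_mul (hdet T).ne' hposT.ne']
      ring
    rw [e1, e2]
    exact Real.log_le_log hposT (by nlinarith)
  · rw [hlog S, hlog T]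
    exact neg_le_neg (Real.log_le_log (hdet S) (hmono S T hST))
end

section
/- Let V be a finite set and P ∈ ℝ^{V×V} a row-stochastic matrix (nonnegative entries, each row summing to 1). For S ⊆ V, define the absorbed matrix P_S by (P_S)_{ij} = P_{ij} if i ∉ S and (P_S)_{ij} = δ_{ij} if i ∈ S. Then for every τ ∈ ℕ, every i ∈ V, every S ⊆ T ⊆ V, every v ∈ V \ T, and every j ∈ V \ (T ∪ {v}), (P_S^τ)_{ij} - (P_{S∪{v}}^τ)_{ij} ≥ (P_T^τ)_{ij} - (P_{T∪{v}}^τ)_{ij}; that is, the absorption probability g_{ij}(S) = (P_S^τ)_{ij} of the walk being at j at time τ is a supermodular function of the absorbing set S. -/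
open Matrix

/-- The modification of a transition matrix `P` in which every state in `S` is made
absorbing: rows indexed by `S` are replaced by the corresponding rows of the identity. -/
def absorb {V : Type*} [DecidableEq V] (P : Matrix V V ℝ) (S : Finset V) :
    Matrix V V ℝ :=
  Matrix.of fun i j => if i ∈ S then (if i = j then 1 else 0) else P i j

section Aux

variable {V : Type*} [Fintype V] [DecidableEq V] (P : Matrix V V ℝ)

lemma absorb_pow_nonneg (hn : ∀ i j, 0 ≤ P i j) (S : Finset V) :
    ∀ (τ : ℕ) (i j : V), 0 ≤ ((absorb P S) ^ τ) i j := by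
  intro τ
  induction τ with
  | zero =>
    intro i j
    simp only [pow_zero, Matrix.one_apply]
    split_ifs <;> norm_num
  | succ n ih =>
    intro i j
    rw [pow_succ', Matrix.mul_apply]
    refine Finset.sum_nonneg fun k _ => mul_nonneg ?_ (ih k j)
    simp only [absorb, Matrix.of_apply]
    split_ifs <;> first | exact zero_le_one | exact le_refl 0 | exact hn i k

lemma absorb_pow_mem (S : Finset V) {i : V} (hi : i ∈ S) (τ : ℕ) (j : V) :
    ((absorb P S) ^ τ) i j = if i = j then 1 else 0 := by
  induction τ with
  | zero => simp [Matrix.one_apply]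
  | succ n ih =>
    rw [pow_succ', Matrix.mul_apply]
    have h : ∀ k, absorb P S i k = if i = k then 1 else 0 := fun k => by
      simp [absorb, hi]
    simp only [h, ite_mul, one_mul, zero_mul]
    rw [Finset.sum_ite_eq]
    simp [ih]

lemma absorb_pow_succ_not_mem (S : Finset V) {i : V} (hi : i ∉ S) (τ : ℕ) (j : V) :
    ((absorb P S) ^ (τ + 1)) i j = ∑ k, P i k * ((absorb P S) ^ τ) k j := by
  rw [pow_succ', Matrix.mul_apply]
  refine Finset.sum_congr rfl fun k _ => ?_
  simp [absorb, hi]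

lemma absorb_pow_mono (hn : ∀ i j, 0 ≤ P i j) {S T : Finset V} (hST : S ⊆ T)
    {j : V} (hj : j ∉ T) :
    ∀ (τ : ℕ) (k : V), ((absorb P T) ^ τ) k j ≤ ((absorb P S) ^ τ) k j := by
  intro τ
  induction τ with
  | zero => intro k; simp
  | succ n ih =>
    intro k
    by_cases hkS : k ∈ S
    · rw [absorb_pow_mem _ _ hkS, absorb_pow_mem _ _ (hST hkS)]
    · by_cases hkT : k ∈ T
      · rw [absorb_pow_mem _ _ hkT, if_neg (show ¬ k = j from fun h => hj (h ▸ hkT))]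
        exact absorb_pow_nonneg P hn S _ k j
      · rw [absorb_pow_succ_not_mem _ _ hkS, absorb_pow_succ_not_mem _ _ hkT]
        exact Finset.sum_le_sum fun l _ => mul_le_mul_of_nonneg_left (ih l) (hn k l)

end Aux

/-- For a row-stochastic matrix `P`, the probability `g_{ij}(S) = (P_S^τ)_{ij}` that the
walk absorbed on `S`, started at `i`, is at `j ∉ T ∪ {v}` at time `τ`, is a supermodular
function of the absorbing set `S`. -/
theorem absorption_probability_supermodular {V : Type*} [Fintype V] [DecidableEq V]
    (P : Matrix V V ℝ)
    (hnonneg : ∀ i j, 0 ≤ P i j)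
    (hrowsum : ∀ i, ∑ j, P i j = 1) :
    ∀ (τ : ℕ) (i : V) (S T : Finset V), S ⊆ T → ∀ v ∉ T, ∀ j : V, j ∉ T → j ≠ v →
      ((absorb P S) ^ τ) i j - ((absorb P (insert v S)) ^ τ) i j ≥
        ((absorb P T) ^ τ) i j - ((absorb P (insert v T)) ^ τ) i j := by
  intro τ i S T hST v hvT j hjT hjv
  have hjS : j ∉ S := fun h => hjT (hST h)
  have hvS : v ∉ S := fun h => hvT (hST h)
  have hjSv : j ∉ insert v S := by simp [hjS, hjv]
  have hjTv : j ∉ insert v T := by simp [hjT, hjv]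
  induction τ generalizing i with
  | zero => simp
  | succ n ih =>
    by_cases hiS : i ∈ S
    · have hiT : i ∈ T := hST hiS
      rw [absorb_pow_mem _ _ hiS, absorb_pow_mem _ _ (Finset.mem_insert_of_mem hiS),
        absorb_pow_mem _ _ hiT, absorb_pow_mem _ _ (Finset.mem_insert_of_mem hiT)]
    · by_cases hiv : i = v
      · subst hiv
        rw [absorb_pow_mem _ _ (Finset.mem_insert_self i S),
          absorb_pow_mem _ _ (Finset.mem_insert_self i T),
          absorb_pow_succ_not_mem _ _ hiS, absorb_pow_succ_not_mem _ _ hvT]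
        rw [if_neg (Ne.symm hjv), sub_zero, sub_zero]
        exact Finset.sum_le_sum fun k _ =>
          mul_le_mul_of_nonneg_left (absorb_pow_mono P hnonneg hST hjT n k) (hnonneg i k)
      · by_cases hiT : i ∈ T
        · have hij : ¬ i = j := fun h => hjT (h ▸ hiT)
          rw [absorb_pow_mem _ _ hiT, absorb_pow_mem _ _ (Finset.mem_insert_of_mem hiT),
            if_neg hij, sub_zero, absorb_pow_succ_not_mem _ _ hiS,
            absorb_pow_succ_not_mem P (insert v S) (by simp [hiS, hiv]) n j]
          rw [← Finset.sum_sub_distrib]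
          refine Finset.sum_nonneg fun k _ => ?_
          rw [← mul_sub]
          refine mul_nonneg (hnonneg i k) (sub_nonneg.mpr ?_)
          exact absorb_pow_mono P hnonneg (Finset.subset_insert v S) hjSv n k
        · rw [absorb_pow_succ_not_mem _ _ hiS,
            absorb_pow_succ_not_mem P (insert v S) (by simp [hiS, hiv]) n j,
            absorb_pow_succ_not_mem _ _ hiT,
            absorb_pow_succ_not_mem P (insert v T) (by simp [hiT, hiv]) n j]
          rw [← Finset.sum_sub_distrib, ← Finset.sum_sub_distrib]
          refine Finset.sum_le_sum fun k _ => ?_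
          rw [← mul_sub, ← mul_sub]
          exact mul_le_mul_of_nonneg_left (ih k) (hnonneg i k)
end

section
/- Let G = (V,E) be a finite directed graph, S ⊆ V an input set, and F = V \ S with m = |F| ≥ 1. Suppose that either (i) some node of F is not reachable by a directed path in G from any node of S, or (ii) there is a dilation: a subset A ⊆ F with |N(A)| < |A|, where N(A) = { j ∈ V : (j,i) ∈ E for some i ∈ A }. Then for every choice of matrices A ∈ ℝ^{F×F} and B ∈ ℝ^{F×S} with A_{ij} ≠ 0 only if (j,i) ∈ E and B_{ij} ≠ 0 only if (j,i) ∈ E, the controllability matrix [B, AB, A²B, …, A^{m-1}B] has rank strictly less than m. -/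
open Matrix

private lemma rank_lt_of_vecMul_eq_zero {m n : Type*} [Fintype m] [Fintype n] [DecidableEq m]
    (M : Matrix m n ℝ) (z : m → ℝ) (hz : z ≠ 0) (h : Matrix.vecMul z M = 0) :
    M.rank < Fintype.card m := by
  rw [← Matrix.rank_transpose]
  have hk : z ∈ LinearMap.ker Mᵀ.mulVecLin := by
    rw [LinearMap.mem_ker, Matrix.mulVecLin_apply, Matrix.mulVec_transpose, h]
  have h1 : 0 < Module.finrank ℝ (LinearMap.ker Mᵀ.mulVecLin) := by
    rw [Module.finrank_pos_iff]
    refine nontrivial_of_ne ⟨z, hk⟩ 0 ?_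
    intro he
    exact hz (by simpa using congrArg Subtype.val he)
  have h2 := LinearMap.finrank_range_add_finrank_ker Mᵀ.mulVecLin
  rw [Module.finrank_fintype_fun_eq_card] at h2
  have h3 : Mᵀ.rank = Module.finrank ℝ (LinearMap.range Mᵀ.mulVecLin) := rfl
  omega

/-- Lin's structural controllability theorem (necessity): if some non-input node is not
accessible from the input set `S`, or the network contains a dilation, then every choice
of weights `A`, `B` compatible with the edge pattern of the directed graph `E` yields a
controllability matrix `[B, AB, …, A^{m-1}B]` of rank strictly less than `m = |V \ S|`. -/
theorem not_structurally_controllable_of_inaccessible_or_dilation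
    {V : Type*} [Fintype V] [DecidableEq V]
    (E : V → V → Prop) (S : Finset V)
    (hF : 1 ≤ Fintype.card {v : V // v ∉ S})
    (hbad : (∃ i : V, i ∉ S ∧ ∀ s ∈ S, ¬ Relation.ReflTransGen E s i) ∨
      (∃ A : Finset V, (∀ a ∈ A, a ∉ S) ∧
        Set.ncard {j : V | ∃ i ∈ A, E j i} < A.card)) :
    ∀ (A : Matrix {v : V // v ∉ S} {v : V // v ∉ S} ℝ)
      (B : Matrix {v : V // v ∉ S} {v : V // v ∈ S} ℝ),
      (∀ i j, A i j ≠ 0 → E j.1 i.1) →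
      (∀ i j, B i j ≠ 0 → E j.1 i.1) →
      (Matrix.of fun (i : {v : V // v ∉ S})
          (p : Fin (Fintype.card {v : V // v ∉ S}) × {v : V // v ∈ S}) =>
            (A ^ (p.1 : ℕ) * B) i p.2).rank < Fintype.card {v : V // v ∉ S} := by
  classical
  intro Am Bm hA hB
  suffices h : ∃ z : {v : V // v ∉ S} → ℝ, z ≠ 0 ∧
      ∀ k : ℕ, Matrix.vecMul z (Am ^ k * Bm) = 0 by
    obtain ⟨z, hz, hzk⟩ := h
    apply rank_lt_of_vecMul_eq_zero _ z hz
    funext p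
    have := congrFun (hzk p.1) p.2
    simpa [Matrix.vecMul, dotProduct] using this
  rcases hbad with ⟨i0, hi0S, hi0⟩ | ⟨𝒜, h𝒜S, hdil⟩
  · -- inaccessible node case
    refine ⟨Pi.single ⟨i0, hi0S⟩ 1, ?_, ?_⟩
    · intro h
      have := congrFun h ⟨i0, hi0S⟩
      simp at this
    · have key : ∀ k : ℕ, ∀ i : {v : V // v ∉ S},
          (∀ s ∈ S, ¬ Relation.ReflTransGen E s i.1) →
          ∀ s, (Am ^ k * Bm) i s = 0 := by
        intro k
        induction k with
        | zero =>
          intro i hi s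
          simp only [pow_zero, Matrix.one_mul]
          by_contra h
          exact hi s.1 s.2 (Relation.ReflTransGen.single (hB i s h))
        | succ k ih =>
          intro i hi s
          have hd : Am ^ (k + 1) * Bm = Am * (Am ^ k * Bm) := by
            rw [pow_succ', Matrix.mul_assoc]
          rw [hd, Matrix.mul_apply]
          apply Finset.sum_eq_zero
          intro j _
          by_cases hAij : Am i j = 0
          · rw [hAij, zero_mul]
          · have hj : ∀ s ∈ S, ¬ Relation.ReflTransGen E s j.1 := by
              intro s hs hr
              exact hi s hs (hr.tail (hA i j hAij))
            rw [ih j hj s, mul_zero]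
      intro k
      funext s
      have heq : Matrix.vecMul (Pi.single (⟨i0, hi0S⟩ : {v : V // v ∉ S}) 1) (Am ^ k * Bm) s
          = (Am ^ k * Bm) ⟨i0, hi0S⟩ s := by
        simp [Matrix.vecMul, dotProduct, Pi.single_apply]
      rw [Pi.zero_apply, heq]
      exact key k ⟨i0, hi0S⟩ hi0 s
  · -- dilation case
    set N : Set V := {j : V | ∃ i ∈ 𝒜, E j i} with hNdef
    have hNfin : N.Finite := Set.toFinite N
    set C : Matrix {v : V // v ∉ S} V ℝ := Matrix.of (fun i j =>
      if h : j ∈ S then Bm i ⟨j, h⟩ else Am i ⟨j, h⟩) with hCdef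
    have hC : ∀ (i : {v : V // v ∉ S}) (j : V), C i j ≠ 0 → E j i.1 := by
      intro i j h
      by_cases hj : j ∈ S
      · exact hB i ⟨j, hj⟩ (by simpa [hCdef, hj] using h)
      · exact hA i ⟨j, hj⟩ (by simpa [hCdef, hj] using h)
    have hcardD : Fintype.card {i : {v : V // v ∉ S} // i.1 ∈ 𝒜} = 𝒜.card := by
      rw [← Fintype.card_coe 𝒜]
      exact Fintype.card_congr
        ⟨fun i => ⟨i.1.1, i.2⟩, fun a => ⟨⟨a.1, h𝒜S a.1 a.2⟩, a.2⟩,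
          fun i => by ext; rfl, fun a => by ext; rfl⟩
    have hcardN : hNfin.toFinset.card = N.ncard := (Set.ncard_eq_toFinset_card _ hNfin).symm
    set Mmat : Matrix hNfin.toFinset {i : {v : V // v ∉ S} // i.1 ∈ 𝒜} ℝ :=
      Matrix.of (fun j i => C i.1 j.1) with hMdef
    have hnotinj : ¬ Function.Injective Mmat.mulVecLin := by
      intro hinj
      have hle := LinearMap.finrank_le_finrank_of_injective hinj
      rw [Module.finrank_fintype_fun_eq_card, Module.finrank_fintype_fun_eq_card,
        hcardD, Fintype.card_coe, hcardN] at hle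
      omega
    obtain ⟨a, b, hab, hne⟩ := Function.not_injective_iff.mp hnotinj
    set w : {i : {v : V // v ∉ S} // i.1 ∈ 𝒜} → ℝ := a - b with hwdef
    have hw : w ≠ 0 := sub_ne_zero.mpr hne
    have hLw : Mmat.mulVecLin w = 0 := by
      rw [hwdef, map_sub, hab, sub_self]
    set z : {v : V // v ∉ S} → ℝ := fun i => if h : i.1 ∈ 𝒜 then w ⟨i, h⟩ else 0 with hzdef
    have hzmem : ∀ i : {v : V // v ∉ S}, z i ≠ 0 → i.1 ∈ 𝒜 := by
      intro i h
      by_contra hc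
      exact h (by simp [hzdef, hc])
    have hz : z ≠ 0 := by
      intro h
      apply hw
      funext i
      have := congrFun h i.1
      rw [Pi.zero_apply, hzdef] at this
      simpa [dif_pos i.2] using this
    have hzC : Matrix.vecMul z C = 0 := by
      funext j
      rw [Pi.zero_apply]
      by_cases hj : j ∈ N
      · have hmv := congrFun hLw ⟨j, hNfin.mem_toFinset.mpr hj⟩
        simp only [Matrix.mulVecLin_apply, Matrix.mulVec, dotProduct,
          Pi.zero_apply] at hmv
        show ∑ i : {v : V // v ∉ S}, z i * C i j = 0
        rw [← Finset.sum_filter_of_ne (p := fun i : {v : V // v ∉ S} => i.1 ∈ 𝒜)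
            (fun i _ h => hzmem i fun hz0 => h (by rw [hz0, zero_mul])),
          Finset.sum_subtype (p := fun i : {v : V // v ∉ S} => i.1 ∈ 𝒜) _
            (by simp) (fun i => z i * C i j), ← hmv]
        apply Finset.sum_congr rfl
        intro i _
        have hzi : z i.1 = w i := by rw [hzdef]; simp [dif_pos i.2]
        rw [hzi, mul_comm]
        rfl
      · show ∑ i : {v : V // v ∉ S}, z i * C i j = 0
        apply Finset.sum_eq_zero
        intro i _
        by_cases hzi : z i = 0
        · rw [hzi, zero_mul]
        · by_cases hCij : C i j = 0
          · rw [hCij, mul_zero]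
          · exact absurd ⟨i.1, hzmem i hzi, hC i j hCij⟩ hj
    have hzA : Matrix.vecMul z Am = 0 := by
      funext i'
      have hC' := congrFun hzC i'.1
      rw [Pi.zero_apply] at hC' ⊢
      rw [← hC']
      show ∑ i : {v : V // v ∉ S}, z i * Am i i' = ∑ i : {v : V // v ∉ S}, z i * C i i'.1
      apply Finset.sum_congr rfl
      intro i _
      congr 1
      rw [hCdef]
      simp only [Matrix.of_apply, dif_neg i'.2]
    have hzB : Matrix.vecMul z Bm = 0 := by
      funext s
      have hC' := congrFun hzC s.1
      rw [Pi.zero_apply] at hC' ⊢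
      rw [← hC']
      show ∑ i : {v : V // v ∉ S}, z i * Bm i s = ∑ i : {v : V // v ∉ S}, z i * C i s.1
      apply Finset.sum_congr rfl
      intro i _
      congr 1
      rw [hCdef]
      simp only [Matrix.of_apply, dif_pos s.2]
    refine ⟨z, hz, ?_⟩
    have hpow : ∀ n : ℕ, Matrix.vecMul z (Am ^ (n + 1)) = 0 := by
      intro n
      induction n with
      | zero => simpa using hzA
      | succ n ih =>
        rw [pow_succ, ← Matrix.vecMul_vecMul, ih, Matrix.zero_vecMul]
    intro k
    cases k with
    | zero => simpa using hzB
    | succ n => rw [← Matrix.vecMul_vecMul, hpow n, Matrix.zero_vecMul]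
end

section
/- Let V be a finite set, k ≥ 1 an integer, and f a monotone nondecreasing submodular set function on subsets of V with f(∅) = 0. Let ∅ = S₀ ⊆ S₁ ⊆ … ⊆ S_k be a greedy chain: for each t, S_t = S_{t-1} ∪ {v_t} where v_t maximizes f(S_{t-1} ∪ {v}) over all v ∈ V. Then f(S_k) ≥ (1 - 1/e) · max{ f(T) : T ⊆ V, |T| ≤ k }. -/
/-- Telescoping bound: the gain of adding a whole set is at most the sum of individual gains. -/
lemma submod_telescope {V : Type*} [DecidableEq V] (f : Finset V → ℝ)
    (hsub : ∀ S T : Finset V, S ⊆ T → ∀ v ∉ T,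
      f (insert v S) - f S ≥ f (insert v T) - f T) :
    ∀ A S : Finset V, Disjoint S A →
      f (S ∪ A) - f S ≤ ∑ v ∈ A, (f (insert v S) - f S) := by
  intro A
  induction A using Finset.induction_on with
  | empty => simp
  | insert _ _ ha _ =>
    rename_i a A ih
    intro S hdis
    have haA : a ∉ A := ha
    have hdis' : Disjoint S A := hdis.mono_right (Finset.subset_insert a A)
    have haS : a ∉ S := fun h => (Finset.disjoint_left.mp hdis) h (Finset.mem_insert_self a A)
    have haSA : a ∉ S ∪ A := by simp [haS, haA]
    have h1 := hsub S (S ∪ A) Finset.subset_union_left a haSA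
    have h2 := ih S hdis'
    rw [Finset.union_insert, Finset.sum_insert haA]
    linarith

/-- Nemhauser–Wolsey–Fisher guarantee: greedy maximization of a monotone nondecreasing
submodular function with `f ∅ = 0` subject to a cardinality constraint `k` achieves at
least a `(1 - 1/e)` fraction of the optimum. -/
theorem greedy_cardinality_bound {V : Type*} [Fintype V] [DecidableEq V]
    (k : ℕ) (hk : 1 ≤ k)
    (f : Finset V → ℝ)
    (hmono : ∀ S T : Finset V, S ⊆ T → f S ≤ f T)
    (hsub : ∀ S T : Finset V, S ⊆ T → ∀ v ∉ T,
      f (insert v S) - f S ≥ f (insert v T) - f T)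
    (hf0 : f ∅ = 0)
    (g : ℕ → Finset V) (hg0 : g 0 = ∅)
    (hgreedy : ∀ t < k, ∃ v : V, g (t + 1) = insert v (g t) ∧
      ∀ w : V, f (insert w (g t)) ≤ f (insert v (g t))) :
    ∀ T : Finset V, T.card ≤ k → (1 - 1 / Real.exp 1) * f T ≤ f (g k) := by
  intro T hT
  have hfT : 0 ≤ f T := by
    have := hmono ∅ T (Finset.empty_subset T)
    linarith
  set ck : ℝ := (k : ℝ) with hck
  have hck1 : (1 : ℝ) ≤ ck := by rw [hck]; exact_mod_cast hk
  have hckpos : (0 : ℝ) < ck := by linarith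
  have hr : (0 : ℝ) ≤ 1 - 1 / ck := by
    have : 1 / ck ≤ 1 := by
      rw [div_le_one hckpos]; exact hck1
    linarith
  -- per-step bound
  have step : ∀ t, t < k → f T - f (g t) ≤ ck * (f (g (t + 1)) - f (g t)) := by
    intro t ht
    obtain ⟨v, hgv, hvmax⟩ := hgreedy t ht
    set S := g t
    have hgain0 : 0 ≤ f (g (t + 1)) - f S := by
      have h1 : ∀ w ∈ S, insert w S = S := fun w hw => Finset.insert_eq_self.mpr hw
      by_cases hvS : v ∈ S
      · rw [hgv, Finset.insert_eq_self.mpr hvS]; linarith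
      · have := hmono S (insert v S) (Finset.subset_insert v S)
        rw [hgv]; linarith
    have htel := submod_telescope f hsub (T \ S) S (Finset.disjoint_sdiff)
    have hTsub : f T ≤ f (S ∪ (T \ S)) :=
      hmono T (S ∪ (T \ S)) (by intro x hx; by_cases h : x ∈ S <;> simp [h, hx])
    have hbound : ∑ v ∈ T \ S, (f (insert v S) - f S)
        ≤ ∑ _v ∈ T \ S, (f (g (t + 1)) - f S) := by
      apply Finset.sum_le_sum
      intro w _
      have := hvmax w
      rw [hgv]; linarith
    have hcardsum : ∑ _v ∈ T \ S, (f (g (t + 1)) - f S)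
        = ((T \ S).card : ℝ) * (f (g (t + 1)) - f S) := by
      rw [Finset.sum_const, nsmul_eq_mul]
    have hcard : ((T \ S).card : ℝ) ≤ ck := by
      have : (T \ S).card ≤ T.card := Finset.card_le_card (Finset.sdiff_subset)
      rw [hck]; exact_mod_cast le_trans this hT
    have : ((T \ S).card : ℝ) * (f (g (t + 1)) - f S)
        ≤ ck * (f (g (t + 1)) - f S) := mul_le_mul_of_nonneg_right hcard hgain0
    linarith
  -- geometric decay
  have chain : ∀ t, t ≤ k → f T - f (g t) ≤ (1 - 1 / ck) ^ t * f T := by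
    intro t
    induction t with
    | zero => intro _; simp [hg0, hf0]
    | succ t ih =>
      intro ht
      have ht' : t < k := Nat.lt_of_succ_le ht
      have ih' := ih (Nat.le_of_lt ht')
      have hs := step t ht'
      have key : f T - f (g (t + 1)) ≤ (1 - 1 / ck) * (f T - f (g t)) := by
        have hne : ck ≠ 0 := ne_of_gt hckpos
        have : (f T - f (g t)) / ck ≤ f (g (t + 1)) - f (g t) := by
          rw [div_le_iff₀ hckpos]; linarith
        have expand : (1 - 1 / ck) * (f T - f (g t))
            = (f T - f (g t)) - (f T - f (g t)) / ck := by
          field_simp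
        rw [expand]; linarith
      calc f T - f (g (t + 1)) ≤ (1 - 1 / ck) * (f T - f (g t)) := key
        _ ≤ (1 - 1 / ck) * ((1 - 1 / ck) ^ t * f T) :=
            mul_le_mul_of_nonneg_left ih' hr
        _ = (1 - 1 / ck) ^ (t + 1) * f T := by ring
  have hfin := chain k le_rfl
  -- (1 - 1/ck)^k ≤ exp(-1)
  have hexp : (1 - 1 / ck) ^ k ≤ Real.exp (-1) := by
    have h1 : 1 - 1 / ck ≤ Real.exp (-(1 / ck)) := by
      have := Real.add_one_le_exp (-(1 / ck))
      linarith
    have h2 : (1 - 1 / ck) ^ k ≤ (Real.exp (-(1 / ck))) ^ k :=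
      pow_le_pow_left₀ hr h1 k
    have h3 : (Real.exp (-(1 / ck))) ^ k = Real.exp ((k : ℝ) * (-(1 / ck))) := by
      rw [← Real.exp_nat_mul]
    have h4 : (k : ℝ) * (-(1 / ck)) = -1 := by
      field_simp; simp [hck]
    rw [h3, h4] at h2
    exact h2
  have hmul : (1 - 1 / ck) ^ k * f T ≤ Real.exp (-1) * f T :=
    mul_le_mul_of_nonneg_right hexp hfT
  have hexpinv : Real.exp (-1) = 1 / Real.exp 1 := by
    rw [Real.exp_neg]; ring
  rw [hexpinv] at hmul
  linarith
end

section
/- Let M be a matroid on a finite ground set V with independent sets I, and let f be a monotone nondecreasing submodular set function on subsets of V with f(∅) = 0. Consider the matroid greedy chain: S₀ = ∅, and at each step t, if some v with S_{t-1} ∪ {v} ∈ I exists, set S_t = S_{t-1} ∪ {v_t} where v_t maximizes f(S_{t-1} ∪ {v}) over all v such that S_{t-1} ∪ {v} ∈ I; stop when no such element exists, producing the set S (a basis of M). Then 2 f(S) ≥ max{ f(T) : T ∈ I }. -/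
open Finset

/-- Abel-type summation identity used for the greedy bound. -/
private lemma greedy_tele_aux (d : ℕ → ℝ) (n : ℕ) :
    ∑ s ∈ Finset.range n, ((s : ℝ) + 1) * (d s - d (s + 1)) =
      ∑ s ∈ Finset.range n, d s - n * d n := by
  induction n with
  | zero => simp
  | succ n ih =>
    rw [Finset.sum_range_succ, Finset.sum_range_succ, ih]
    push_cast
    ring

/-- Fisher–Nemhauser–Wolsey 1/2-approximation: greedy maximization of a monotone
nondecreasing submodular function over the independent sets of a matroid, run until no
element can be added while preserving independence, achieves at least half the optimum. -/
theorem greedy_matroid_half_bound {V : Type*} [Fintype V] [DecidableEq V]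
    (I : Finset V → Prop)
    (hM1 : I ∅)
    (hM2 : ∀ X Y : Finset V, X ⊆ Y → I Y → I X)
    (hM3 : ∀ X Y : Finset V, I X → I Y → X.card < Y.card →
      ∃ y ∈ Y \ X, I (insert y X))
    (f : Finset V → ℝ) (hf0 : f ∅ = 0)
    (hmono : ∀ S T : Finset V, S ⊆ T → f S ≤ f T)
    (hsub : ∀ S T : Finset V, S ⊆ T → ∀ v ∉ T,
      f (insert v S) - f S ≥ f (insert v T) - f T)
    (g : ℕ → Finset V) (N : ℕ) (hg0 : g 0 = ∅)
    (hstep : ∀ t < N, ∃ v ∉ g t, g (t + 1) = insert v (g t) ∧ I (g (t + 1)) ∧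
      ∀ w ∉ g t, I (insert w (g t)) → f (insert w (g t)) ≤ f (g (t + 1)))
    (hstop : ∀ w ∉ g N, ¬ I (insert w (g N))) :
    ∀ T : Finset V, I T → f T ≤ 2 * f (g N) := by
  classical
  intro T hT
  -- basic chain facts
  have hsubchain : ∀ t, t < N → g t ⊆ g (t + 1) := by
    intro t ht
    obtain ⟨v, hv, he, _, _⟩ := hstep t ht
    rw [he]; exact Finset.subset_insert _ _
  have hchain : ∀ b, b ≤ N → ∀ a, a ≤ b → g a ⊆ g b := by
    intro b
    induction b with
    | zero =>
      intro _ a ha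
      have : a = 0 := by omega
      rw [this]
    | succ b ih =>
      intro hb a ha
      rcases eq_or_lt_of_le ha with h | h
      · rw [h]
      · exact (ih (by omega) a (by omega)).trans (hsubchain b (by omega))
  have hindep : ∀ t, t ≤ N → I (g t) := by
    intro t ht
    cases t with
    | zero => rw [hg0]; exact hM1
    | succ t =>
      obtain ⟨v, _, _, hI, _⟩ := hstep t (by omega)
      exact hI
  have hcard : ∀ t, t ≤ N → (g t).card = t := by
    intro t
    induction t with
    | zero => intro _; rw [hg0]; simp
    | succ t ih =>
      intro ht
      obtain ⟨v, hv, he, _, _⟩ := hstep t (by omega)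
      rw [he, Finset.card_insert_of_notMem hv, ih (by omega)]
  -- trivial case T = ∅
  rcases eq_or_ne T ∅ with rfl | hTne
  · have h0 : f ∅ ≤ f (g N) := hmono ∅ (g N) (Finset.empty_subset _)
    rw [hf0] at h0 ⊢
    linarith
  have hN : 1 ≤ N := by
    by_contra h
    have hN0 : N = 0 := by omega
    obtain ⟨v, hv⟩ := Finset.nonempty_iff_ne_empty.mpr hTne
    have hv1 : I {v} := hM2 {v} T (Finset.singleton_subset_iff.mpr hv) hT
    have hv2 : v ∉ g N := by rw [hN0, hg0]; simp
    apply hstop v hv2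
    rw [hN0, hg0]
    simpa using hv1
  set W : Finset V := T \ g N with hW
  set A : ℕ → Finset V := fun t => W.filter (fun v => I (insert v (g t))) with hAdef
  -- exchange counting lemma
  have hA : ∀ t, t ≤ N → W.card ≤ (A t).card + t := by
    intro t ht
    set Z : Finset V := g t ∪ (T ∩ g N) with hZ
    have grow : ∀ k (X : Finset V), I X → Z ⊆ X → X ⊆ g t ∪ T →
        (∀ v ∈ X, v ∉ Z → v ∈ A t) → T.card ≤ X.card + k →
        T.card ≤ (A t).card + Z.card := by
      intro k
      induction k with
      | zero =>
        intro X hXI hZX hXT hXA hcardk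
        have h1 : X \ Z ⊆ A t := by
          intro v hv
          exact hXA v (Finset.mem_sdiff.mp hv).1 (Finset.mem_sdiff.mp hv).2
        have h2 : X.card ≤ (X \ Z).card + Z.card := Finset.card_le_card_sdiff_add_card
        have h3 : (X \ Z).card ≤ (A t).card := Finset.card_le_card h1
        omega
      | succ k ih =>
        intro X hXI hZX hXT hXA hcardk
        rcases le_or_gt T.card X.card with hle | hlt
        · have h1 : X \ Z ⊆ A t := by
            intro v hv
            exact hXA v (Finset.mem_sdiff.mp hv).1 (Finset.mem_sdiff.mp hv).2
          have h2 : X.card ≤ (X \ Z).card + Z.card := Finset.card_le_card_sdiff_add_card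
          have h3 : (X \ Z).card ≤ (A t).card := Finset.card_le_card h1
          omega
        · obtain ⟨y, hy, hyI⟩ := hM3 X T hXI hT hlt
          have hyT : y ∈ T := (Finset.mem_sdiff.mp hy).1
          have hyX : y ∉ X := (Finset.mem_sdiff.mp hy).2
          have hyN : y ∉ g N := by
            intro hc
            exact hyX (hZX (Finset.mem_union_right _ (Finset.mem_inter.mpr ⟨hyT, hc⟩)))
          have hyA : y ∈ A t := by
            refine Finset.mem_filter.mpr ⟨Finset.mem_sdiff.mpr ⟨hyT, hyN⟩, ?_⟩
            have hgtX : g t ⊆ X := (Finset.subset_union_left).trans hZX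
            exact hM2 _ _ (Finset.insert_subset_insert y hgtX) hyI
          refine ih (insert y X) hyI (hZX.trans (Finset.subset_insert _ _))
            (Finset.insert_subset (Finset.mem_union_right _ hyT) hXT) ?_ ?_
          · intro v hv hvZ
            rcases Finset.mem_insert.mp hv with rfl | hvX
            · exact hyA
            · exact hXA v hvX hvZ
          · rw [Finset.card_insert_of_notMem hyX]; omega
    have hZI : I Z := by
      apply hM2 Z (g N) _ (hindep N le_rfl)
      exact Finset.union_subset (hchain N le_rfl t ht) Finset.inter_subset_right
    have hres : T.card ≤ (A t).card + Z.card :=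
      grow T.card Z hZI subset_rfl
        (Finset.union_subset_union subset_rfl Finset.inter_subset_left)
        (fun v hv hvZ => absurd hv hvZ) (by omega)
    have hZcard : Z.card ≤ t + (T ∩ g N).card := by
      calc Z.card ≤ (g t).card + (T ∩ g N).card := Finset.card_union_le _ _
        _ = t + (T ∩ g N).card := by rw [hcard t ht]
    have hTsplit : W.card + (T ∩ g N).card = T.card := by
      rw [hW]; exact Finset.card_sdiff_add_card_inter T (g N)
    omega
  -- the greedy step index for each element of W
  set τ : V → ℕ := fun v => Nat.findGreatest (fun t => I (insert v (g t))) (N - 1) with hτdef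
  have hP0 : ∀ v ∈ W, I (insert v (g 0)) := by
    intro v hv
    rw [hg0]
    have : ({v} : Finset V) ⊆ T := Finset.singleton_subset_iff.mpr (Finset.mem_sdiff.mp hv).1
    simpa using hM2 {v} T this hT
  have hτspec : ∀ v ∈ W, I (insert v (g (τ v))) := by
    intro v hv
    have h := Nat.findGreatest_spec (P := fun t => I (insert v (g t)))
      (n := N - 1) (m := 0) (Nat.zero_le _) (hP0 v hv)
    simpa [hτdef] using h
  have hτlt : ∀ v, τ v < N := by
    intro v
    have h := Nat.findGreatest_le (P := fun t => I (insert v (g t))) (N - 1)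
    simp only [hτdef]
    omega
  -- the gain sequence
  set d : ℕ → ℝ := fun s => f (g (min (s + 1) N)) - f (g (min s N)) with hd
  have hd0 : ∀ s, 0 ≤ d s := by
    intro s
    have : g (min s N) ⊆ g (min (s + 1) N) :=
      hchain (min (s + 1) N) (min_le_right _ _) (min s N) (by omega)
    have := hmono _ _ this
    simp only [hd]
    linarith
  have hdN : d N = 0 := by
    simp only [hd]
    rw [min_self, min_eq_right (by omega)]
    ring
  have hdval : ∀ s, s < N → d s = f (g (s + 1)) - f (g s) := by
    intro s hs
    simp only [hd]
    rw [min_eq_left (by omega), min_eq_left (by omega)]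
  -- gains are nonincreasing on the run
  have hE : ∀ s, s < N → 0 ≤ d s - d (s + 1) := by
    intro s hs
    rcases Nat.lt_or_ge (s + 1) N with h | h
    · rw [hdval s hs, hdval (s + 1) h]
      obtain ⟨u, hu, he, hI, _⟩ := hstep (s + 1) h
      obtain ⟨w, hw, hew, hIw, hmaxs⟩ := hstep s hs
      have huS : u ∉ g s := fun hc => hu (hsubchain s hs hc)
      have huI : I (insert u (g s)) := by
        apply hM2 _ (g (s + 2)) _ hI
        rw [he]
        exact Finset.insert_subset_insert u (hsubchain s hs)
      have h1 : f (insert u (g s)) ≤ f (g (s + 1)) := hmaxs u huS huI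
      have h2 := hsub (g s) (g (s + 1)) (hsubchain s hs) u hu
      have h3 : f (g (s + 2)) = f (insert u (g (s + 1))) := by rw [he]
      linarith
    · have : d (s + 1) = 0 := by
        simp only [hd]
        rw [min_eq_right (by omega), min_eq_right (by omega)]
        ring
      rw [this]
      simpa using hd0 s
  -- counting bound
  have hcount : ∀ s, s < N → (W.filter (fun v => τ v ≤ s)).card ≤ s + 1 := by
    intro s hs
    have hpart := Finset.card_filter_add_card_filter_not
      (s := W) (p := fun v => τ v ≤ s)
    rcases Nat.lt_or_ge (s + 1) N with h | h
    · have hsub2 : A (s + 1) ⊆ W.filter (fun v => ¬ τ v ≤ s) := by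
        intro v hv
        have hv' := Finset.mem_filter.mp hv
        refine Finset.mem_filter.mpr ⟨hv'.1, ?_⟩
        have h2 : s + 1 ≤ τ v := by
          simp only [hτdef]
          exact Nat.le_findGreatest (by omega) hv'.2
        omega
      have h1 := hA (s + 1) (by omega)
      have h2 := Finset.card_le_card hsub2
      omega
    · have hAN : A N = ∅ := by
        rw [Finset.eq_empty_iff_forall_notMem]
        intro v hv
        have hv' := Finset.mem_filter.mp hv
        exact hstop v (Finset.mem_sdiff.mp hv'.1).2 hv'.2
      have h1 := hA N le_rfl
      rw [hAN] at h1
      simp only [Finset.card_empty, Nat.zero_add] at h1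
      have h2 : (W.filter (fun v => τ v ≤ s)).card ≤ W.card := Finset.card_filter_le _ _
      omega
  -- submodular covering bound
  have hcover : ∀ (U : Finset V), (∀ a ∈ U, a ∉ g N) →
      f (g N ∪ U) ≤ f (g N) + ∑ v ∈ U, (f (insert v (g N)) - f (g N)) := by
    intro U
    induction U using Finset.induction_on with
    | empty => simp
    | insert a U ha ih =>
      intro hdis
      have haS : a ∉ g N := hdis a (Finset.mem_insert_self _ _)
      have haU : a ∉ g N ∪ U := by simp [ha, haS]
      have h1 := hsub (g N) (g N ∪ U) Finset.subset_union_left a haU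
      have h2 := ih (fun b hb => hdis b (Finset.mem_insert_of_mem hb))
      have h3 : g N ∪ insert a U = insert a (g N ∪ U) := by rw [Finset.union_insert]
      rw [Finset.sum_insert ha, h3]
      linarith
  -- main chain of inequalities
  have hTsub : T ⊆ g N ∪ W := by
    intro x hx
    by_cases hxS : x ∈ g N
    · exact Finset.mem_union_left _ hxS
    · exact Finset.mem_union_right _ (Finset.mem_sdiff.mpr ⟨hx, hxS⟩)
  have hmain1 : f T ≤ f (g N) + ∑ v ∈ W, (f (insert v (g N)) - f (g N)) :=
    (hmono T (g N ∪ W) hTsub).trans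
      (hcover W (fun a ha => (Finset.mem_sdiff.mp ha).2))
  have hmain2 : ∑ v ∈ W, (f (insert v (g N)) - f (g N)) ≤ ∑ v ∈ W, d (τ v) := by
    apply Finset.sum_le_sum
    intro v hv
    have hvS : v ∉ g N := (Finset.mem_sdiff.mp hv).2
    have hgτ : g (τ v) ⊆ g N := hchain N le_rfl (τ v) (le_of_lt (hτlt v))
    have h1 := hsub (g (τ v)) (g N) hgτ v hvS
    obtain ⟨u, hu, he, hI, hmax⟩ := hstep (τ v) (hτlt v)
    have hvτ : v ∉ g (τ v) := fun hc => hvS (hgτ hc)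
    have h2 : f (insert v (g (τ v))) ≤ f (g (τ v + 1)) := hmax v hvτ (hτspec v hv)
    rw [hdval (τ v) (hτlt v)]
    linarith
  have hmain3 : ∑ v ∈ W, d (τ v) ≤ ∑ s ∈ Finset.range N, d s := by
    have h1 : ∀ v ∈ W, d (τ v) =
        ∑ s ∈ Finset.range N, (if τ v ≤ s then d s - d (s + 1) else 0) := by
      intro v hv
      rw [← Finset.sum_filter]
      have hfe : (Finset.range N).filter (fun s => τ v ≤ s) = Finset.Ico (τ v) N := by
        ext s
        simp only [Finset.mem_filter, Finset.mem_range, Finset.mem_Ico]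
        omega
      rw [hfe, Finset.sum_Ico_eq_sub _ (le_of_lt (hτlt v)),
        Finset.sum_range_sub' d, Finset.sum_range_sub' d, hdN]
      ring
    calc ∑ v ∈ W, d (τ v)
        = ∑ v ∈ W, ∑ s ∈ Finset.range N, (if τ v ≤ s then d s - d (s + 1) else 0) :=
          Finset.sum_congr rfl h1
      _ = ∑ s ∈ Finset.range N, ∑ v ∈ W, (if τ v ≤ s then d s - d (s + 1) else 0) :=
          Finset.sum_comm
      _ ≤ ∑ s ∈ Finset.range N, ((s : ℝ) + 1) * (d s - d (s + 1)) := by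
          apply Finset.sum_le_sum
          intro s hs
          rw [← Finset.sum_filter, Finset.sum_const, nsmul_eq_mul]
          have hc : ((W.filter (fun v => τ v ≤ s)).card : ℝ) ≤ (s : ℝ) + 1 := by
            exact_mod_cast hcount s (Finset.mem_range.mp hs)
          have he := hE s (Finset.mem_range.mp hs)
          nlinarith
      _ = ∑ s ∈ Finset.range N, d s - N * d N := greedy_tele_aux d N
      _ = ∑ s ∈ Finset.range N, d s := by rw [hdN]; ring
  have htel : ∑ s ∈ Finset.range N, d s = f (g N) := by
    have h1 : ∑ s ∈ Finset.range N, d s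
        = f (g (min N N)) - f (g (min 0 N)) := Finset.sum_range_sub (fun s => f (g (min s N))) N
    rw [h1, min_self, Nat.min_eq_left (by omega), hg0, hf0]
    ring
  linarith
end

section
/- Let V be a finite set, f a monotone nonincreasing supermodular set function on subsets of V, and g : ℝ → ℝ a nondecreasing convex function. Then the composition h(S) = g(f(S)) is supermodular: for all S ⊆ T ⊆ V and v ∈ V \ T, h(S ∪ {v}) - h(S) ≤ h(T ∪ {v}) - h(T). -/
lemma convex_shift_mono (g : ℝ → ℝ) (hg : ConvexOn ℝ Set.univ g)
    {x y d : ℝ} (hxy : x ≤ y) (hd : 0 ≤ d) :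
    g (x + d) - g x ≤ g (y + d) - g y := by
  rcases eq_or_lt_of_le hxy with rfl | hxy
  · simp
  rcases eq_or_lt_of_le hd with rfl | hd
  · simp
  have h1 : (g (x + d) - g x) / (x + d - x) ≤ (g (y + d) - g x) / (y + d - x) :=
    hg.secant_mono trivial trivial trivial (by linarith) (by linarith) (by linarith)
  have h2 : (g x - g (y + d)) / (x - (y + d)) ≤ (g y - g (y + d)) / (y - (y + d)) :=
    hg.secant_mono trivial trivial trivial (by linarith) (by linarith) (by linarith)
  have e2 : (g x - g (y + d)) / (x - (y + d)) = (g (y + d) - g x) / (y + d - x) := by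
    rw [← neg_div_neg_eq]; ring_nf
  have e3 : (g y - g (y + d)) / (y - (y + d)) = (g (y + d) - g y) / d := by
    rw [← neg_div_neg_eq]; ring_nf
  rw [e2] at h2
  rw [e3] at h2
  have h3 : (g (x + d) - g x) / d ≤ (g (y + d) - g y) / d := by
    have : (x : ℝ) + d - x = d := by ring
    rw [this] at h1
    linarith
  exact (div_le_div_iff_of_pos_right hd).mp h3

/-- The composition of a nondecreasing convex function `g : ℝ → ℝ` with a monotone
nonincreasing supermodular set function `f` is supermodular. -/
theorem convex_comp_supermodular {V : Type*} [DecidableEq V]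
    (f : Finset V → ℝ)
    (hmono : ∀ S T : Finset V, S ⊆ T → f S ≥ f T)
    (hsuper : ∀ S T : Finset V, S ⊆ T → ∀ v ∉ T,
      f (insert v S) - f S ≤ f (insert v T) - f T)
    (g : ℝ → ℝ) (hg_mono : Monotone g) (hg_conv : ConvexOn ℝ Set.univ g) :
    ∀ S T : Finset V, S ⊆ T → ∀ v ∉ T,
      g (f (insert v S)) - g (f S) ≤ g (f (insert v T)) - g (f T) := by
  intro S T hST v hv
  set a' := f (insert v S)
  set a := f S
  set b' := f (insert v T)
  set b := f T
  have hsup : a' - a ≤ b' - b := hsuper S T hST v hv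
  have ha'b' : b' ≤ a' := hmono _ _ (Finset.insert_subset_insert v hST)
  have hb'b : b' ≤ b := hmono _ _ (Finset.subset_insert v T)
  have hd : 0 ≤ b - b' := by linarith
  -- g a - g a' ≥ g (a' + (b - b')) - g a' ≥ g (b' + (b - b')) - g b' = g b - g b'
  have h1 : g (b' + (b - b')) - g b' ≤ g (a' + (b - b')) - g a' :=
    convex_shift_mono g hg_conv ha'b' hd
  have h2 : g (a' + (b - b')) ≤ g a := hg_mono (by linarith)
  have e : b' + (b - b') = b := by ring
  rw [e] at h1
  linarith
end
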